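/- The IncreasingSeq constraint breaks all symmetry when both variables and values are fully interchangeable: let n ≥ 1, and say y : Fin n → Fin m satisfies IncreasingSeq iff (1) y 0 = 0; (2) for every i with i+1 < n, y (i+1) = y i or (y i : ℕ) + 1 = (y (i+1) : ℕ); and (3) for every j with j+1 < m, the number of indices i with y i = j+1 is at most the number of indices i with y i = j. Then for every x : Fin n → Fin m there is exactly one y : Fin n → Fin m such that y satisfies IncreasingSeq and y = τ ∘ x ∘ σ for some permutation σ of Fin n and permutation τ of Fin m. -/

import Mathlib

/-- The `IncreasingSeq` constraint: the sequence starts with value `0`,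
consecutive entries are equal or increase by exactly one, and the number of
occurrences of each value is monotonically nonincreasing along the values. -/
def IncreasingSeq {n m : ℕ} (hn : 0 < n) (y : Fin n → Fin m) : Prop :=
  (y ⟨0, hn⟩ : ℕ) = 0 ∧
  (∀ (i : Fin n) (h : (i : ℕ) + 1 < n),
    y ⟨(i : ℕ) + 1, h⟩ = y i ∨ (y i : ℕ) + 1 = (y ⟨(i : ℕ) + 1, h⟩ : ℕ)) ∧
  (∀ j : ℕ, j + 1 < m →
    (Finset.univ.filter (fun i : Fin n => (y i : ℕ) = j + 1)).card ≤
      (Finset.univ.filter (fun i : Fin n => (y i : ℕ) = j)).card)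

open Finset

def cntF {n m : ℕ} (y : Fin n → Fin m) (j : ℕ) : ℕ :=
  (univ.filter fun i : Fin n => (y i : ℕ) = j).card

lemma mem_iff_lt_card_of_lower {n : ℕ} (A : Finset (Fin n))
    (h : ∀ i j : Fin n, j ≤ i → i ∈ A → j ∈ A) (i : Fin n) :
    i ∈ A ↔ (i : ℕ) < A.card := by
  constructor
  · intro hi
    have hsub : Finset.Iic i ⊆ A := fun j hj => h i j (Finset.mem_Iic.mp hj) hi
    have := Finset.card_le_card hsub
    rw [Fin.card_Iic] at this
    omega
  · intro hi
    by_contra hni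
    have hsub : A ⊆ Finset.Iio i := by
      intro j hj
      rw [Finset.mem_Iio]
      rcases lt_or_ge j i with h' | h'
      · exact h'
      · exact absurd (h j i h' hj) hni
    have := Finset.card_le_card hsub
    rw [Fin.card_Iio] at this
    omega

lemma increasingSeq_monotone {n m : ℕ} (hn : 0 < n) {y : Fin n → Fin m}
    (hy : IncreasingSeq hn y) : Monotone y := by
  have step : ∀ (b : ℕ) (hb : b + 1 < n), (y ⟨b, by omega⟩ : ℕ) ≤ y ⟨b + 1, hb⟩ := by
    intro b hb
    have h2 : y ⟨b + 1, hb⟩ = y ⟨b, by omega⟩ ∨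
        (y ⟨b, by omega⟩ : ℕ) + 1 = (y ⟨b + 1, hb⟩ : ℕ) := hy.2.1 ⟨b, by omega⟩ hb
    rcases h2 with h | h
    · exact le_of_eq (congrArg Fin.val h.symm)
    · exact le_of_lt (by omega)
  have key : ∀ (k : ℕ) (hk : k < n) (i : Fin n), (i : ℕ) ≤ k → (y i : ℕ) ≤ y ⟨k, hk⟩ := by
    intro k
    induction k with
    | zero =>
      intro hk i hi
      have hie : i = ⟨0, hk⟩ := Fin.ext (show (i : ℕ) = 0 by omega)
      rw [hie]
    | succ k ih =>
      intro hk i hi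
      rcases Nat.lt_or_ge (i : ℕ) (k + 1) with h | h
      · exact le_trans (ih (by omega) i (by omega)) (step k hk)
      · have hie : i = ⟨k + 1, hk⟩ := Fin.ext (show (i : ℕ) = k + 1 by omega)
        rw [hie]
  intro i j hij
  rw [Fin.le_def]
  have := key (j : ℕ) j.isLt i hij
  simpa using this

lemma cnt_antitone {n m : ℕ} (hn : 0 < n) {y : Fin n → Fin m}
    (hy : IncreasingSeq hn y) : ∀ a b : ℕ, a ≤ b → b < m → cntF y b ≤ cntF y a := by
  intro a b hab hbm
  induction b with
  | zero =>
    have ha : a = 0 := by omega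
    simp [ha]
  | succ b ih =>
    rcases Nat.lt_or_ge a (b + 1) with h | h
    · exact le_trans (hy.2.2 b hbm) (ih (by omega) (by omega))
    · have ha : a = b + 1 := by omega
      simp [ha]

lemma cnt_perm {n m : ℕ} (y : Fin n → Fin m) (φ : Equiv.Perm (Fin m))
    (ψ : Equiv.Perm (Fin n)) (j : Fin m) :
    cntF (φ ∘ y ∘ ψ) (j : ℕ) = cntF y ((φ.symm j : Fin m) : ℕ) := by
  unfold cntF
  apply Finset.card_bij' (fun i _ => ψ i) (fun i _ => ψ.symm i)
  · intro a ha
    simp only [Finset.mem_filter, Finset.mem_univ, true_and, Function.comp_apply] at ha ⊢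
    have h1 : φ (y (ψ a)) = j := Fin.ext ha
    rw [← h1]
    simp
  · intro a ha
    simp only [Finset.mem_filter, Finset.mem_univ, true_and, Function.comp_apply] at ha ⊢
    have h1 : y a = φ.symm j := Fin.ext ha
    simp [h1]
  · intros; simp
  · intros; simp

lemma cnt_eq_zero {n m : ℕ} (y : Fin n → Fin m) {j : ℕ} (h : m ≤ j) : cntF y j = 0 := by
  unfold cntF
  rw [Finset.card_eq_zero, Finset.filter_eq_empty_iff]
  intro i _
  have := (y i).isLt
  omega

lemma card_le_eq_sum {n m : ℕ} (y : Fin n → Fin m) (k : ℕ) :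
    (univ.filter fun i : Fin n => (y i : ℕ) ≤ k).card
      = ∑ j ∈ Finset.range (k + 1), cntF y j := by
  rw [Finset.card_eq_sum_card_fiberwise (f := fun i => (y i : ℕ))
      (t := Finset.range (k + 1)) (fun i hi => by
        simp only [Finset.mem_filter, Finset.coe_filter, Set.mem_setOf_eq] at hi
        simp only [Finset.mem_range, Finset.coe_range, Set.mem_Iio]; omega)]
  apply Finset.sum_congr rfl
  intro j hj
  simp only [Finset.mem_range] at hj
  congr 1
  ext i
  simp only [Finset.mem_filter, Finset.mem_univ, true_and]
  constructor
  · rintro ⟨_, h⟩; exact h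
  · intro h; exact ⟨by omega, h⟩
lemma uniq_core {n m : ℕ} (hn : 0 < n) {y y' : Fin n → Fin m}
    (hy : IncreasingSeq hn y) (hy' : IncreasingSeq hn y')
    (φ : Equiv.Perm (Fin m)) (ψ : Equiv.Perm (Fin n)) (h : y' = ⇑φ ∘ y ∘ ⇑ψ) :
    y' = y := by
  have hcnt : ∀ j : Fin m, cntF y' (j : ℕ) = cntF y ((φ.symm j : Fin m) : ℕ) := by
    intro j; rw [h]; exact cnt_perm y φ ψ j
  have hN : ∀ v : ℕ,
      (univ.filter fun j : Fin m => v ≤ cntF y' (j : ℕ)).card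
        = (univ.filter fun j : Fin m => v ≤ cntF y (j : ℕ)).card := by
    intro v
    apply Finset.card_bij' (fun j _ => φ.symm j) (fun j _ => φ j)
    · intro a ha
      simp only [Finset.mem_filter, Finset.mem_univ, true_and] at ha ⊢
      rw [← hcnt a]; exact ha
    · intro a ha
      simp only [Finset.mem_filter, Finset.mem_univ, true_and] at ha ⊢
      rw [hcnt (φ a)]; simpa using ha
    · intros; simp
    · intros; simp
  have lower : ∀ (z : Fin n → Fin m), IncreasingSeq hn z → ∀ (v : ℕ) (j : Fin m),
      v ≤ cntF z (j : ℕ) ↔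
        (j : ℕ) < (univ.filter fun j : Fin m => v ≤ cntF z (j : ℕ)).card := by
    intro z hz v j
    have := mem_iff_lt_card_of_lower (univ.filter fun j : Fin m => v ≤ cntF z (j : ℕ))
      (fun a b hba hmem => by
        simp only [Finset.mem_filter, Finset.mem_univ, true_and] at hmem ⊢
        exact le_trans hmem (cnt_antitone hn hz (b : ℕ) (a : ℕ) (Fin.le_def.1 hba) a.isLt)) j
    simpa using this
  have hc : ∀ j : Fin m, cntF y (j : ℕ) = cntF y' (j : ℕ) := by
    intro j
    apply le_antisymm
    · have h1 : cntF y (j : ℕ) ≤ cntF y (j : ℕ) := le_rfl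
      rw [lower y hy _ j, ← hN, ← lower y' hy' _ j] at h1
      exact h1
    · have h1 : cntF y' (j : ℕ) ≤ cntF y' (j : ℕ) := le_rfl
      rw [lower y' hy' _ j, hN, ← lower y hy _ j] at h1
      exact h1
  have hcN : ∀ j : ℕ, cntF y j = cntF y' j := by
    intro j
    rcases Nat.lt_or_ge j m with hj | hj
    · exact hc ⟨j, hj⟩
    · rw [cnt_eq_zero y hj, cnt_eq_zero y' hj]
  have hS : ∀ k : ℕ,
      (univ.filter fun i : Fin n => (y i : ℕ) ≤ k).card
        = (univ.filter fun i : Fin n => (y' i : ℕ) ≤ k).card := by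
    intro k
    rw [card_le_eq_sum, card_le_eq_sum]
    exact Finset.sum_congr rfl (fun j _ => hcN j)
  have lowv : ∀ (z : Fin n → Fin m), IncreasingSeq hn z → ∀ (k : ℕ) (i : Fin n),
      (z i : ℕ) ≤ k ↔
        (i : ℕ) < (univ.filter fun i : Fin n => (z i : ℕ) ≤ k).card := by
    intro z hz k i
    have hmono := increasingSeq_monotone hn hz
    have := mem_iff_lt_card_of_lower (univ.filter fun i : Fin n => (z i : ℕ) ≤ k)
      (fun a b hba hmem => by
        simp only [Finset.mem_filter, Finset.mem_univ, true_and] at hmem ⊢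
        exact le_trans (Fin.le_def.1 (hmono hba)) hmem) i
    simpa using this
  funext i
  apply Fin.ext
  apply le_antisymm
  · have h1 : (y i : ℕ) ≤ (y i : ℕ) := le_rfl
    rw [lowv y hy _ i, hS, ← lowv y' hy' _ i] at h1
    exact h1
  · have h1 : (y' i : ℕ) ≤ (y' i : ℕ) := le_rfl
    rw [lowv y' hy' _ i, ← hS, ← lowv y hy _ i] at h1
    exact h1
lemma exists_incseq {n m : ℕ} (hn : 0 < n) (x : Fin n → Fin m) :
    ∃ (σ : Equiv.Perm (Fin n)) (τ : Equiv.Perm (Fin m)),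
      IncreasingSeq hn (⇑τ ∘ x ∘ ⇑σ) := by
  have hm : 0 < m := (x ⟨0, hn⟩).pos
  set c : Fin m → ℕ := fun j => cntF x (j : ℕ) with hc
  set τ : Equiv.Perm (Fin m) := (Fin.revPerm.trans (Tuple.sort c)).symm with hτ
  set σ : Equiv.Perm (Fin n) := Tuple.sort (fun i => τ (x i)) with hσ
  set y : Fin n → Fin m := ⇑τ ∘ x ∘ ⇑σ with hy
  have hmono : Monotone y := by
    have := Tuple.monotone_sort (fun i => τ (x i))
    exact this
  -- counts of y expressed through the sorted counts of x
  have hcnt1 : ∀ j : Fin m, cntF y (j : ℕ) = c (Tuple.sort c (Fin.rev j)) := by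
    intro j
    have h1 : y = ⇑τ ∘ x ∘ ⇑σ := hy
    rw [h1, cnt_perm x τ σ j]
    have h2 : τ.symm j = Tuple.sort c (Fin.rev j) := by
      rw [hτ]; rfl
    rw [h2]
  have hanti : ∀ a b : Fin m, a ≤ b → cntF y (b : ℕ) ≤ cntF y (a : ℕ) := by
    intro a b hab
    rw [hcnt1 a, hcnt1 b]
    exact Tuple.monotone_sort c (Fin.rev_le_rev.mpr hab)
  have cnt_pos : ∀ i : Fin n, 1 ≤ cntF y ((y i : ℕ)) := by
    intro i
    refine Finset.card_pos.mpr ⟨i, ?_⟩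
    simp [cntF]
  have cnt_to_exists : ∀ j : ℕ, 1 ≤ cntF y j → ∃ i, (y i : ℕ) = j := by
    intro j hj
    obtain ⟨i, hi⟩ := Finset.card_pos.mp hj
    simp only [Finset.mem_filter, Finset.mem_univ, true_and] at hi
    exact ⟨i, hi⟩
  refine ⟨σ, τ, ?_, ?_, ?_⟩
  · -- starts at 0
    show (y ⟨0, hn⟩ : ℕ) = 0
    have h0 : 1 ≤ cntF y 0 := by
      refine le_trans (cnt_pos ⟨0, hn⟩) (hanti ⟨0, hm⟩ (y ⟨0, hn⟩) ?_)
      exact Fin.le_def.2 (Nat.zero_le _)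
    obtain ⟨i, hi⟩ := cnt_to_exists 0 h0
    have : (y ⟨0, hn⟩ : ℕ) ≤ (y i : ℕ) :=
      Fin.le_def.1 (hmono (Fin.le_def.2 (Nat.zero_le _)))
    omega
  · -- unit steps
    intro i h
    show y ⟨(i : ℕ) + 1, h⟩ = y i ∨ (y i : ℕ) + 1 = (y ⟨(i : ℕ) + 1, h⟩ : ℕ)
    have hle : (y i : ℕ) ≤ (y ⟨(i : ℕ) + 1, h⟩ : ℕ) :=
      Fin.le_def.1 (hmono (Fin.le_def.2 (by simp)))
    rcases Nat.lt_or_ge ((y i : ℕ) + 1) ((y ⟨(i : ℕ) + 1, h⟩ : ℕ)) with hlt | hge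
    · exfalso
      have hwm : (y i : ℕ) + 1 < m := lt_trans hlt (y _).isLt
      have h1 : 1 ≤ cntF y ((y i : ℕ) + 1) := by
        refine le_trans (cnt_pos ⟨(i : ℕ) + 1, h⟩)
          (hanti ⟨(y i : ℕ) + 1, hwm⟩ (y ⟨(i : ℕ) + 1, h⟩) (Fin.le_def.2 ?_))
        show (y i : ℕ) + 1 ≤ (y ⟨(i : ℕ) + 1, h⟩ : ℕ)
        omega
      obtain ⟨i', hi'⟩ := cnt_to_exists _ h1
      rcases le_or_gt i' i with h2 | h2
      · have := Fin.le_def.1 (hmono h2)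
        omega
      · have h3 : (⟨(i : ℕ) + 1, h⟩ : Fin n) ≤ i' := Fin.le_def.2 (by
          show (i : ℕ) + 1 ≤ (i' : ℕ)
          have := Fin.lt_def.1 h2
          omega)
        have := Fin.le_def.1 (hmono h3)
        omega
    · rcases Nat.lt_or_ge ((y i : ℕ)) ((y ⟨(i : ℕ) + 1, h⟩ : ℕ)) with hlt2 | hge2
      · right; omega
      · left; exact Fin.ext (by omega)
  · -- nonincreasing counts
    intro j hj
    have := hanti ⟨j, by omega⟩ ⟨j + 1, hj⟩ (Fin.le_def.2 (by show j ≤ j + 1; omega))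
    exact this

/-- The `IncreasingSeq` constraint breaks all symmetry when both variables and
values are fully interchangeable: every sequence has exactly one variant under
the joint action of variable and value permutations satisfying
`IncreasingSeq`. -/
theorem increasingSeq_breaks_all_symmetry {n m : ℕ} (hn : 0 < n) (x : Fin n → Fin m) :
    ∃! y : Fin n → Fin m,
      IncreasingSeq hn y ∧
      ∃ (σ : Equiv.Perm (Fin n)) (τ : Equiv.Perm (Fin m)), y = τ ∘ x ∘ σ := by
  obtain ⟨σ, τ, hy⟩ := exists_incseq hn x
  refine ⟨⇑τ ∘ x ∘ ⇑σ, ⟨hy, σ, τ, rfl⟩, ?_⟩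
  rintro z ⟨hz, σ', τ', rfl⟩
  refine uniq_core hn hy hz ((τ.symm.trans τ')) (σ'.trans σ.symm) ?_
  funext i
  simp
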